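/- arXiv:2503.05173 — 4 statements merged into one kernel-verified Lean document; each statement's English description precedes it below -/
import Mathlib

section
/- For all real numbers t > 0, integer z ≥ 1, and points a, b, c in a metric space with distance d, the inequality d(a,b)^z ≤ (1+t)^(z-1) · d(a,c)^z + (1+1/t)^(z-1) · d(c,b)^z holds. -/
lemma aux_pow_add (t : ℝ) (ht : 0 < t) (n : ℕ) {x y : ℝ} (hx : 0 ≤ x) (hy : 0 ≤ y) :
    (x + y) ^ (n + 1) ≤ (1 + t) ^ n * x ^ (n + 1) + (1 + 1 / t) ^ n * y ^ (n + 1) := by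
  have h1t : (0:ℝ) < 1 + t := by linarith
  have hconv := (convexOn_pow (n + 1)).2 (x := (1 + t) * x) (y := (1 + 1/t) * y)
  have hu : (1 + t) * x ∈ Set.Ici (0:ℝ) := by simp only [Set.mem_Ici]; positivity
  have hv : (1 + 1/t) * y ∈ Set.Ici (0:ℝ) := by simp only [Set.mem_Ici]; positivity
  have ha : (0:ℝ) ≤ 1 / (1 + t) := by positivity
  have hb : (0:ℝ) ≤ t / (1 + t) := by positivity
  have hab : 1 / (1 + t) + t / (1 + t) = 1 := by field_simp
  have key := hconv hu hv ha hb hab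
  have hcomb : (1 / (1 + t)) • ((1 + t) * x) + (t / (1 + t)) • ((1 + 1/t) * y) = x + y := by
    simp only [smul_eq_mul]
    field_simp
    ring
  rw [hcomb] at key
  refine key.trans (le_of_eq ?_)
  simp only [smul_eq_mul, mul_pow]
  have e1 : 1 / (1 + t) * ((1 + t) ^ (n+1) * x ^ (n+1)) = (1 + t) ^ n * x ^ (n+1) := by
    rw [pow_succ]
    field_simp
  have e2 : t / (1 + t) * ((1 + 1/t) ^ (n+1) * y ^ (n+1)) = (1 + 1/t) ^ n * y ^ (n+1) := by
    rw [pow_succ]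
    field_simp
    ring
  rw [e1, e2]

/-- Generalized triangle inequality for powered distances. -/
theorem stmt_0 {X : Type*} [MetricSpace X] (t : ℝ) (ht : 0 < t) (z : ℕ) (hz : 1 ≤ z)
    (a b c : X) :
    dist a b ^ z ≤ (1 + t) ^ (z - 1) * dist a c ^ z + (1 + 1 / t) ^ (z - 1) * dist c b ^ z := by
  obtain ⟨n, rfl⟩ : ∃ n, z = n + 1 := ⟨z - 1, (Nat.succ_pred_eq_of_pos hz).symm⟩
  simp only [Nat.add_sub_cancel]
  calc dist a b ^ (n + 1) ≤ (dist a c + dist c b) ^ (n + 1) :=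
        pow_le_pow_left₀ dist_nonneg (dist_triangle a c b) _
    _ ≤ _ := aux_pow_add t ht n dist_nonneg dist_nonneg
end

section
/- Let w_1, ..., w_n be reals with w_i ≥ 1 for all i, let S_i = w_1 + ... + w_i, let N = S_n, and let T ≥ 1 be a real parameter. Define prob_i = min(T · w_i / S_i, 1). Then ∑_{i=1}^n prob_i ≤ T · ln N + 1. -/
lemma sum_ge_card (w : ℕ → ℝ) (n : ℕ) (hw : ∀ i ∈ Finset.Icc 1 n, 1 ≤ w i) :
    (n : ℝ) ≤ ∑ j ∈ Finset.Icc 1 n, w j := by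
  calc (n : ℝ) = ∑ j ∈ Finset.Icc 1 n, (1 : ℝ) := by simp
    _ ≤ ∑ j ∈ Finset.Icc 1 n, w j := Finset.sum_le_sum hw

lemma aux_bound (w : ℕ → ℝ) (T : ℝ) (hT : 1 ≤ T) :
    ∀ n, 1 ≤ n → (∀ i ∈ Finset.Icc 1 n, 1 ≤ w i) →
    ∑ i ∈ Finset.Icc 1 n, min (T * w i / ∑ j ∈ Finset.Icc 1 i, w j) 1 ≤
      T * (Real.log (∑ j ∈ Finset.Icc 1 n, w j) - Real.log (w 1)) + 1 := by
  intro n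
  induction n with
  | zero => omega
  | succ n ih =>
    intro _ hw
    rcases Nat.eq_or_lt_of_le (Nat.one_le_iff_ne_zero.mpr (Nat.succ_ne_zero n)) with h1 | h1
    · have hn : n = 0 := by omega
      subst hn
      simp [min_le_iff]
    · have hn : 1 ≤ n := by omega
      have hw' : ∀ i ∈ Finset.Icc 1 n, 1 ≤ w i := fun i hi => hw i (by
        simp only [Finset.mem_Icc] at hi ⊢; omega)
      have ihn := ih hn hw'
      set S := ∑ j ∈ Finset.Icc 1 n, w j with hS
      have hSpos : 0 < S := lt_of_lt_of_le (by exact_mod_cast hn) (sum_ge_card w n hw')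
      have hwn : 1 ≤ w (n+1) := hw (n+1) (by simp)
      have hsucc : ∑ j ∈ Finset.Icc 1 (n+1), w j = S + w (n+1) :=
        Finset.sum_Icc_succ_top (by omega) w
      have hS'pos : 0 < S + w (n+1) := by linarith
      rw [Finset.sum_Icc_succ_top (by omega : 1 ≤ n + 1), hsucc]
      have key : w (n+1) / (S + w (n+1)) ≤
          Real.log (S + w (n+1)) - Real.log S := by
        have hlog : Real.log (S / (S + w (n+1))) ≤ S / (S + w (n+1)) - 1 :=
          Real.log_le_sub_one_of_pos (by positivity)
        rw [Real.log_div (ne_of_gt hSpos) (ne_of_gt hS'pos)] at hlog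
        have heq : S / (S + w (n+1)) - 1 = -(w (n+1) / (S + w (n+1))) := by
          field_simp
          ring
        rw [heq] at hlog
        linarith
      have hmin : min (T * w (n+1) / (S + w (n+1))) 1 ≤
          T * (Real.log (S + w (n+1)) - Real.log S) := by
        calc min (T * w (n+1) / (S + w (n+1))) 1 ≤ T * w (n+1) / (S + w (n+1)) :=
              min_le_left _ _
          _ = T * (w (n+1) / (S + w (n+1))) := by ring
          _ ≤ T * (Real.log (S + w (n+1)) - Real.log S) :=
              mul_le_mul_of_nonneg_left key (by linarith)
      linarith

/-- Expected sample size bound for the streaming sampler. -/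
theorem stmt_3 (n : ℕ) (w : ℕ → ℝ) (hw : ∀ i ∈ Finset.Icc 1 n, 1 ≤ w i)
    (T : ℝ) (hT : 1 ≤ T) :
    ∑ i ∈ Finset.Icc 1 n, min (T * w i / ∑ j ∈ Finset.Icc 1 i, w j) 1 ≤
      T * Real.log (∑ j ∈ Finset.Icc 1 n, w j) + 1 := by
  rcases Nat.eq_zero_or_pos n with rfl | hn
  · simp
  · have h := aux_bound w T hT n hn hw
    have hw1 : 1 ≤ w 1 := hw 1 (Finset.mem_Icc.mpr ⟨le_refl 1, hn⟩)
    have hlog1 : 0 ≤ Real.log (w 1) := Real.log_nonneg hw1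
    nlinarith [mul_nonneg (le_trans zero_le_one hT) hlog1]
end

section
/- Consider 4n points on the real line, each labeled with a group in {1, 2}: group 1 consists of a zeros at position 0 and (2n - a) ones at position Δ; group 2 consists of n points at 0 and n points at Δ, where Δ > 0 and 0 ≤ a ≤ 2n. Consider any partition of the points into two clusters such that each cluster contains at least half of its points from group 2, together with any choice of 2 centers in R, with cost equal to the sum over all points of the distance to the center of their cluster. If a = n, the optimal cost of such a fair 2-clustering is 0; if a = n + 1, every fair 2-clustering has cost at least Δ. -/
open Finset in
private lemma split_card_g2 {ι : Type*} [Fintype ι] (isG2 : ι → Bool) (p : ι → Prop)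
    [DecidablePred p] :
    (univ.filter p).card
      = (univ.filter fun i => isG2 i = false ∧ p i).card
        + (univ.filter fun i => isG2 i = true ∧ p i).card := by
  classical
  rw [← Finset.card_filter_add_card_filter_not
        (s := univ.filter p) (p := fun i => isG2 i = false), Finset.filter_filter,
      Finset.filter_filter]
  congr 1
  · apply Finset.card_nbij' id id <;> simp +contextual [and_comm, Set.MapsTo, Set.LeftInvOn, Set.RightInvOn, Set.EqOn]
  · apply Finset.card_nbij' id id <;> simp +contextual [and_comm, Set.MapsTo, Set.LeftInvOn, Set.RightInvOn, Set.EqOn]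

open Classical in
/-- Combinatorial core of the sliding-window lower bound for fair 2-median. -/
theorem stmt_8 {ι : Type*} [Fintype ι] (n a : ℕ) (Δ : ℝ) (hΔ : 0 < Δ) (ha : a ≤ 2 * n)
    (pos : ι → ℝ) (isG2 : ι → Bool)
    (hpos : ∀ i, pos i = 0 ∨ pos i = Δ)
    (h10 : (Finset.univ.filter fun i => isG2 i = false ∧ pos i = 0).card = a)
    (h1Δ : (Finset.univ.filter fun i => isG2 i = false ∧ pos i = Δ).card = 2 * n - a)
    (h20 : (Finset.univ.filter fun i => isG2 i = true ∧ pos i = 0).card = n)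
    (h2Δ : (Finset.univ.filter fun i => isG2 i = true ∧ pos i = Δ).card = n) :
    (a = n → ∃ (f : ι → Bool) (c₁ c₂ : ℝ),
        (∀ b : Bool, (Finset.univ.filter fun i => f i = b).card ≤
          2 * (Finset.univ.filter fun i => f i = b ∧ isG2 i = true).card) ∧
        ∑ i, |pos i - (if f i then c₁ else c₂)| = 0) ∧
    (a = n + 1 → ∀ (f : ι → Bool) (c₁ c₂ : ℝ),
        (∀ b : Bool, (Finset.univ.filter fun i => f i = b).card ≤
          2 * (Finset.univ.filter fun i => f i = b ∧ isG2 i = true).card) →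
        Δ ≤ ∑ i, |pos i - (if f i then c₁ else c₂)|) := by
  classical
  constructor
  · -- Part 1 : a = n
    intro han
    refine ⟨fun i => if pos i = 0 then true else false, 0, Δ, ?_, ?_⟩
    · intro b
      cases b
      · -- cluster false : points at Δ
        have h1 : (Finset.univ.filter fun i =>
            (if pos i = 0 then true else false) = false)
            = Finset.univ.filter fun i => pos i = Δ := by
          apply Finset.filter_congr
          intro i _
          rcases hpos i with h | h <;> simp [h, hΔ.ne, hΔ.ne']
        have h2 : (Finset.univ.filter fun i =>
            (if pos i = 0 then true else false) = false ∧ isG2 i = true)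
            = Finset.univ.filter fun i => isG2 i = true ∧ pos i = Δ := by
          apply Finset.filter_congr
          intro i _
          rcases hpos i with h | h <;> simp [h, hΔ.ne, hΔ.ne', and_comm]
        rw [h1, h2, split_card_g2 isG2, h1Δ, h2Δ]
        omega
      · -- cluster true : points at 0
        have h1 : (Finset.univ.filter fun i =>
            (if pos i = 0 then true else false) = true)
            = Finset.univ.filter fun i => pos i = 0 := by
          apply Finset.filter_congr
          intro i _
          rcases hpos i with h | h <;> simp [h, hΔ.ne, hΔ.ne']
        have h2 : (Finset.univ.filter fun i =>
            (if pos i = 0 then true else false) = true ∧ isG2 i = true)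
            = Finset.univ.filter fun i => isG2 i = true ∧ pos i = 0 := by
          apply Finset.filter_congr
          intro i _
          rcases hpos i with h | h <;> simp [h, hΔ.ne, hΔ.ne', and_comm]
        rw [h1, h2, split_card_g2 isG2, h10, h20]
        omega
    · apply Finset.sum_eq_zero
      intro i _
      rcases hpos i with h | h <;> simp [h, hΔ.ne']
  · -- Part 2 : a = n + 1
    intro han f c₁ c₂ hfair
    by_contra hlt
    push_neg at hlt
    set F : ι → ℝ := fun i => |pos i - (if f i then c₁ else c₂)| with hF
    have hnonneg : ∀ i, 0 ≤ F i := fun i => abs_nonneg _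
    have hn : 1 ≤ n := by omega
    -- a mixed cluster costs at least Δ
    have key : ∀ i j, f i = f j → pos i = 0 → pos j = Δ → False := by
      intro i j hfij hi hj
      have hij : i ≠ j := by
        intro e; rw [e, hj] at hi; exact hΔ.ne' hi
      have hsum : F i + F j ≤ ∑ k, F k := by
        have h := Finset.sum_le_sum_of_subset_of_nonneg
          (Finset.subset_univ ({i, j} : Finset ι)) (fun k _ _ => hnonneg k)
        rwa [Finset.sum_pair hij] at h
      set c : ℝ := if f j then c₁ else c₂ with hc
      have hFi : F i = |0 - c| := by rw [hF]; simp only [hi, hfij, hc]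
      have hFj : F j = |Δ - c| := by rw [hF]; simp only [hj, hc]
      have hd : Δ ≤ F i + F j := by
        rw [hFi, hFj]
        have : Δ = (Δ - c) - (0 - c) := by ring
        calc Δ = |(Δ - c) - (0 - c)| := by rw [← this]; exact (abs_of_pos hΔ).symm
          _ ≤ |Δ - c| + |0 - c| := abs_sub _ _
          _ = |0 - c| + |Δ - c| := by ring
      linarith
    -- pick a point at 0 and a point at Δ
    obtain ⟨i₀, hi₀⟩ : ∃ i, pos i = 0 := by
      have : 0 < (Finset.univ.filter fun i => isG2 i = false ∧ pos i = 0).card := by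
        rw [h10]; omega
      obtain ⟨i, hi⟩ := Finset.card_pos.mp this
      exact ⟨i, (Finset.mem_filter.mp hi).2.2⟩
    obtain ⟨j₀, hj₀⟩ : ∃ j, pos j = Δ := by
      have : 0 < (Finset.univ.filter fun i => isG2 i = true ∧ pos i = Δ).card := by
        rw [h2Δ]; omega
      obtain ⟨j, hj⟩ := Finset.card_pos.mp this
      exact ⟨j, (Finset.mem_filter.mp hj).2.2⟩
    have hne : f i₀ ≠ f j₀ := fun h => key i₀ j₀ h hi₀ hj₀
    -- cluster membership is determined by position
    have hall : ∀ i, f i = f i₀ ↔ pos i = 0 := by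
      intro i
      constructor
      · intro hfi
        rcases hpos i with h | h
        · exact h
        · exact (key i₀ i hfi.symm hi₀ h).elim
      · intro hi
        by_contra hne2
        have hfj : f i = f j₀ := by
          cases hb : f i <;> cases hb' : f i₀ <;> cases hb'' : f j₀ <;> simp_all
        exact key i j₀ hfj hi hj₀
    -- count the cluster of i₀ : it has 2n+1 points but only n from group 2
    have hc1 : (Finset.univ.filter fun i => f i = f i₀).card = 2 * n + 1 := by
      have h1 : (Finset.univ.filter fun i => f i = f i₀)
          = Finset.univ.filter fun i => pos i = 0 :=
        Finset.filter_congr fun i _ => hall i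
      rw [h1, split_card_g2 isG2, h10, h20, han]
      omega
    have hc2 : (Finset.univ.filter fun i => f i = f i₀ ∧ isG2 i = true).card = n := by
      have h1 : (Finset.univ.filter fun i => f i = f i₀ ∧ isG2 i = true)
          = Finset.univ.filter fun i => isG2 i = true ∧ pos i = 0 :=
        Finset.filter_congr fun i _ => by rw [hall i, and_comm]
      rw [h1, h20]
    have := hfair (f i₀)
    rw [hc1, hc2] at this
    omega
end

section
/- Let P ⊆ R^d be a finite weighted set, C a finite center set, Γ an assignment constraint with Γ(C) = w_P(P), and suppose every point of P and every center of C lies in a set of diameter at most R. Let Γ' be another assignment constraint on C with Γ'(C) = w_P(P). Then |cost(P, C, Γ) − cost(P, C, Γ')| ≤ R^z · ∑_{c∈C} |Γ(c) − Γ'(c)|. -/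
open Finset

/-- Minimum constrained assignment cost. -/
noncomputable def assignCost {ι κ : Type*} [Fintype ι] [Fintype κ] {d : ℕ} (z : ℕ)
    (pts : ι → EuclideanSpace ℝ (Fin d)) (ctr : κ → EuclideanSpace ℝ (Fin d))
    (w : ι → ℝ) (Γ : κ → ℝ) : ℝ :=
  sInf { x : ℝ | ∃ σ : ι → κ → ℝ, (∀ p c, 0 ≤ σ p c) ∧ (∀ p, ∑ c, σ p c = w p) ∧
    (∀ c, ∑ p, σ p c = Γ c) ∧ x = ∑ p, ∑ c, σ p c * dist (pts p) (ctr c) ^ z }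

section Aux

variable {ι κ : Type*} [Fintype ι] [Fintype κ] {d : ℕ}

private lemma all_zero {α : Type*} [Fintype α] {f : α → ℝ} (h0 : ∀ c, 0 ≤ f c)
    (h : ∑ c, f c = 0) (c : α) : f c = 0 :=
  (Finset.sum_eq_zero_iff_of_nonneg (fun i _ => h0 i)).mp h c (Finset.mem_univ c)

private lemma feasSet_nonempty (z : ℕ) (pts : ι → EuclideanSpace ℝ (Fin d))
    (ctr : κ → EuclideanSpace ℝ (Fin d)) (w : ι → ℝ) (hw : ∀ p, 0 ≤ w p)
    (Γ : κ → ℝ) (hΓ : ∀ c, 0 ≤ Γ c) (hsum : ∑ c, Γ c = ∑ p, w p) :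
    { x : ℝ | ∃ σ : ι → κ → ℝ, (∀ p c, 0 ≤ σ p c) ∧ (∀ p, ∑ c, σ p c = w p) ∧
      (∀ c, ∑ p, σ p c = Γ c) ∧
      x = ∑ p, ∑ c, σ p c * dist (pts p) (ctr c) ^ z }.Nonempty := by
  by_cases hW : ∑ p, w p = 0
  · refine ⟨_, fun _ _ => 0, fun _ _ => le_refl 0, ?_, ?_, rfl⟩
    · intro p; simpa using (all_zero hw hW p).symm
    · intro c; simpa using (all_zero hΓ (hsum.trans hW) c).symm
  · refine ⟨_, fun p c => w p * Γ c / (∑ q, w q), ?_, ?_, ?_, rfl⟩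
    · intro p c
      exact div_nonneg (mul_nonneg (hw p) (hΓ c)) (Finset.sum_nonneg fun q _ => hw q)
    · intro p
      rw [← Finset.sum_div, ← Finset.mul_sum, hsum, mul_div_assoc, div_self hW, mul_one]
    · intro c
      rw [← Finset.sum_div, ← Finset.sum_mul, mul_comm, mul_div_assoc, div_self hW, mul_one]

private lemma feasSet_bddBelow (z : ℕ) (pts : ι → EuclideanSpace ℝ (Fin d))
    (ctr : κ → EuclideanSpace ℝ (Fin d)) (w : ι → ℝ) (Γ : κ → ℝ) :
    BddBelow { x : ℝ | ∃ σ : ι → κ → ℝ, (∀ p c, 0 ≤ σ p c) ∧ (∀ p, ∑ c, σ p c = w p) ∧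
      (∀ c, ∑ p, σ p c = Γ c) ∧
      x = ∑ p, ∑ c, σ p c * dist (pts p) (ctr c) ^ z } := by
  refine ⟨0, fun x hx => ?_⟩
  obtain ⟨σ, h0, -, -, hxe⟩ := hx
  rw [hxe]
  exact Finset.sum_nonneg fun p _ => Finset.sum_nonneg fun c _ =>
    mul_nonneg (h0 p c) (pow_nonneg dist_nonneg z)

private lemma reroute (z : ℕ) (pts : ι → EuclideanSpace ℝ (Fin d))
    (ctr : κ → EuclideanSpace ℝ (Fin d)) {R : ℝ} (hR0 : 0 ≤ R)
    (hdist : ∀ p c, dist (pts p) (ctr c) ≤ R)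
    (w : ι → ℝ) (Γ Γ' : κ → ℝ) (hΓ' : ∀ c, 0 ≤ Γ' c)
    (hsum : ∑ c, Γ c = ∑ c, Γ' c)
    (σ : ι → κ → ℝ) (hσ0 : ∀ p c, 0 ≤ σ p c) (hσr : ∀ p, ∑ c, σ p c = w p)
    (hσc : ∀ c, ∑ p, σ p c = Γ c) :
    ∃ σ' : ι → κ → ℝ, (∀ p c, 0 ≤ σ' p c) ∧ (∀ p, ∑ c, σ' p c = w p) ∧
      (∀ c, ∑ p, σ' p c = Γ' c) ∧
      ∑ p, ∑ c, σ' p c * dist (pts p) (ctr c) ^ z ≤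
        (∑ p, ∑ c, σ p c * dist (pts p) (ctr c) ^ z) + R ^ z * ∑ c, |Γ c - Γ' c| := by
  classical
  have hΓnn : ∀ c, 0 ≤ Γ c := fun c =>
    (hσc c) ▸ Finset.sum_nonneg fun p _ => hσ0 p c
  set e : κ → ℝ := fun c => max (Γ c - Γ' c) 0 with he_def
  set f : κ → ℝ := fun c => max (Γ' c - Γ c) 0 with hf_def
  set M : ℝ := ∑ c, e c with hM_def
  have he : ∀ c, 0 ≤ e c := fun c => le_max_right _ _
  have hf : ∀ c, 0 ≤ f c := fun c => le_max_right _ _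
  have hM : 0 ≤ M := Finset.sum_nonneg fun c _ => he c
  have hfe : ∀ c, f c - e c = Γ' c - Γ c := by
    intro c
    have := max_zero_sub_max_neg_zero_eq_self (Γ' c - Γ c)
    simp only [he_def, hf_def, neg_sub] at this ⊢
    linarith
  have hsumf : ∑ c, f c = M := by
    have h1 : ∑ c, f c - ∑ c, e c = ∑ c, Γ' c - ∑ c, Γ c := by
      rw [← Finset.sum_sub_distrib, ← Finset.sum_sub_distrib]
      exact Finset.sum_congr rfl fun c _ => hfe c
    rw [hM_def]; linarith
  set T : κ → κ → ℝ := fun c c' =>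
    (if c = c' then min (Γ c) (Γ' c) else 0) + (if M = 0 then 0 else e c * f c' / M)
    with hT_def
  have hT0 : ∀ c c', 0 ≤ T c c' := by
    intro c c'
    refine add_nonneg ?_ ?_
    · split
      · exact le_min (hΓnn c) (hΓ' c)
      · exact le_refl 0
    · split
      · exact le_refl 0
      · exact div_nonneg (mul_nonneg (he c) (hf c')) hM
  have hminmax : ∀ c, min (Γ c) (Γ' c) + e c = Γ c := by
    intro c
    rcases le_total (Γ c) (Γ' c) with h | h
    · rw [min_eq_left h]
      have : e c = 0 := max_eq_right (by linarith)
      linarith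
    · rw [min_eq_right h]
      have : e c = Γ c - Γ' c := max_eq_left (by linarith)
      linarith
  have hminmax' : ∀ c, min (Γ c) (Γ' c) + f c = Γ' c := by
    intro c
    rcases le_total (Γ c) (Γ' c) with h | h
    · rw [min_eq_left h]
      have : f c = Γ' c - Γ c := max_eq_left (by linarith)
      linarith
    · rw [min_eq_right h]
      have : f c = 0 := max_eq_right (by linarith)
      linarith
  have hTrow : ∀ c, ∑ c', T c c' = Γ c := by
    intro c
    rw [hT_def]
    rw [Finset.sum_add_distrib]
    have hd : ∑ c', (if c = c' then min (Γ c) (Γ' c) else 0) = min (Γ c) (Γ' c) := by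
      simp
    have hs : ∑ c', (if M = 0 then 0 else e c * f c' / M) = if M = 0 then 0 else e c := by
      split_ifs with hM0
      · simp
      · rw [← Finset.sum_div, ← Finset.mul_sum, hsumf, mul_div_assoc, div_self hM0, mul_one]
    rw [hd, hs]
    split_ifs with hM0
    · have : e c = 0 := all_zero he hM0 c
      have := hminmax c
      linarith
    · exact hminmax c
  have hTcol : ∀ c', ∑ c, T c c' = Γ' c' := by
    intro c'
    rw [hT_def]
    rw [Finset.sum_add_distrib]
    have hd : ∑ c, (if c = c' then min (Γ c) (Γ' c) else 0) = min (Γ c') (Γ' c') := by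
      simp
    have hs : ∑ c, (if M = 0 then 0 else e c * f c' / M) = if M = 0 then 0 else f c' := by
      split_ifs with hM0
      · simp
      · rw [← Finset.sum_div, ← Finset.sum_mul, mul_comm, mul_div_assoc, div_self hM0, mul_one]
    rw [hd, hs]
    split_ifs with hM0
    · have : f c' = 0 := all_zero hf (hsumf.trans hM0) c'
      have := hminmax' c'
      linarith
    · exact hminmax' c'
  have hTz : ∀ c c', Γ c = 0 → T c c' = 0 := by
    intro c c' h
    have h1 : min (Γ c) (Γ' c) = 0 := by rw [h]; exact min_eq_left (hΓ' c)
    have h2 : e c = 0 := by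
      rw [he_def]; simp only [h, zero_sub]
      exact max_eq_right (by linarith [hΓ' c])
    simp [hT_def, h1, h2]
  have hσz : ∀ p c, Γ c = 0 → σ p c = 0 := fun p c h =>
    all_zero (fun q => hσ0 q c) ((hσc c).trans h) p
  refine ⟨fun p c' => ∑ c, σ p c * (T c c' / Γ c), ?_, ?_, ?_, ?_⟩
  · intro p c'
    exact Finset.sum_nonneg fun c _ =>
      mul_nonneg (hσ0 p c) (div_nonneg (hT0 c c') (hΓnn c))
  · intro p
    rw [Finset.sum_comm]
    have hterm : ∀ c, ∑ c', σ p c * (T c c' / Γ c) = σ p c := by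
      intro c
      rw [← Finset.mul_sum, ← Finset.sum_div, hTrow]
      by_cases h : Γ c = 0
      · simp [hσz p c h]
      · rw [div_self h, mul_one]
    rw [Finset.sum_congr rfl fun c _ => hterm c, hσr p]
  · intro c'
    rw [Finset.sum_comm]
    have hterm : ∀ c, ∑ p, σ p c * (T c c' / Γ c) = T c c' := by
      intro c
      rw [← Finset.sum_mul, hσc c]
      by_cases h : Γ c = 0
      · simp [h, hTz c c' h]
      · field_simp
    rw [Finset.sum_congr rfl fun c _ => hterm c, hTcol c']
  · set D : ι → κ → ℝ := fun p c => dist (pts p) (ctr c) ^ z with hDdef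
    have hD0 : ∀ p c, 0 ≤ D p c := fun p c => pow_nonneg dist_nonneg z
    have hDR : ∀ p c, D p c ≤ R ^ z := fun p c =>
      pow_le_pow_left₀ dist_nonneg (hdist p c) z
    have hRz : (0:ℝ) ≤ R ^ z := pow_nonneg hR0 z
    calc ∑ p, ∑ c', (∑ c, σ p c * (T c c' / Γ c)) * D p c'
        = ∑ p, ∑ c, ∑ c', σ p c * (T c c' / Γ c) * D p c' := by
          refine Finset.sum_congr rfl fun p _ => ?_
          rw [Finset.sum_comm]
          exact Finset.sum_congr rfl fun c' _ => Finset.sum_mul _ _ _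
      _ ≤ ∑ p, ∑ c, ∑ c', (σ p c * (T c c' / Γ c) * D p c
            + if c = c' then 0 else σ p c * (T c c' / Γ c) * R ^ z) := by
          refine Finset.sum_le_sum fun p _ => Finset.sum_le_sum fun c _ =>
            Finset.sum_le_sum fun c' _ => ?_
          by_cases h : c = c'
          · subst h; simp
          · simp only [if_neg h]
            have h1 : 0 ≤ σ p c * (T c c' / Γ c) :=
              mul_nonneg (hσ0 p c) (div_nonneg (hT0 c c') (hΓnn c))
            have h2 := mul_le_mul_of_nonneg_left (hDR p c') h1
            have h3 := mul_nonneg h1 (hD0 p c)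
            linarith
      _ = (∑ p, ∑ c, σ p c * D p c)
            + ∑ p, ∑ c, ∑ c', (if c = c' then 0 else σ p c * (T c c' / Γ c) * R ^ z) := by
          rw [← Finset.sum_add_distrib]
          refine Finset.sum_congr rfl fun p _ => ?_
          rw [← Finset.sum_add_distrib]
          refine Finset.sum_congr rfl fun c _ => ?_
          rw [Finset.sum_add_distrib]
          congr 1
          have : ∀ c' : κ, σ p c * (T c c' / Γ c) * D p c
              = (σ p c * D p c) * (T c c' / Γ c) := fun c' => by ring
          rw [Finset.sum_congr rfl fun c' _ => this c', ← Finset.mul_sum,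
            ← Finset.sum_div, hTrow]
          by_cases h : Γ c = 0
          · simp [hσz p c h]
          · rw [div_self h, mul_one]
      _ ≤ (∑ p, ∑ c, σ p c * D p c) + R ^ z * ∑ c, |Γ c - Γ' c| := by
          refine add_le_add le_rfl ?_
          calc ∑ p, ∑ c, ∑ c', (if c = c' then 0 else σ p c * (T c c' / Γ c) * R ^ z)
              = ∑ c, ∑ c', (if c = c' then 0 else Γ c * (T c c' / Γ c) * R ^ z) := by
                rw [Finset.sum_comm]
                refine Finset.sum_congr rfl fun c _ => ?_
                rw [Finset.sum_comm]
                refine Finset.sum_congr rfl fun c' _ => ?_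
                by_cases h : c = c'
                · simp [h]
                · simp only [if_neg h]
                  rw [← Finset.sum_mul, ← Finset.sum_mul, hσc]
            _ = ∑ c, ∑ c', (if c = c' then 0 else T c c' * R ^ z) := by
                refine Finset.sum_congr rfl fun c _ => Finset.sum_congr rfl fun c' _ => ?_
                by_cases h : c = c'
                · simp [h]
                · simp only [if_neg h]
                  by_cases hg : Γ c = 0
                  · rw [hg, hTz c c' hg]; ring
                  · field_simp
            _ ≤ ∑ c, ∑ c', (if M = 0 then 0 else e c * f c' / M) * R ^ z := by
                refine Finset.sum_le_sum fun c _ => Finset.sum_le_sum fun c' _ => ?_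
                by_cases h : c = c'
                · simp only [if_pos h]
                  refine mul_nonneg ?_ hRz
                  split
                  · exact le_refl 0
                  · exact div_nonneg (mul_nonneg (he c) (hf c')) hM
                · simp only [if_neg h, hT_def]
                  apply mul_le_mul_of_nonneg_right _ hRz
                  simp
            _ = (if M = 0 then 0 else M) * R ^ z := by
                have hpull : ∀ c : κ, ∑ c', (if M = 0 then 0 else e c * f c' / M) * R ^ z
                    = (∑ c', (if M = 0 then 0 else e c * f c' / M)) * R ^ z :=
                  fun c => (Finset.sum_mul _ _ _).symm
                rw [Finset.sum_congr rfl fun c _ => hpull c, ← Finset.sum_mul]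
                congr 1
                split_ifs with hM0
                · simp
                · have h2 : ∑ c : κ, ∑ c' : κ, e c * f c' / M
                      = (∑ c : κ, ∑ c' : κ, e c * f c') / M := by
                    rw [Finset.sum_div]
                    exact Finset.sum_congr rfl fun c _ => (Finset.sum_div _ _ _).symm
                  rw [h2, ← Finset.sum_mul_sum, hsumf, ← hM_def, mul_div_assoc,
                    div_self hM0, mul_one]
            _ ≤ R ^ z * ∑ c, |Γ c - Γ' c| := by
                have h1 : (if M = 0 then 0 else M) ≤ ∑ c, |Γ c - Γ' c| := by
                  have hMle : M ≤ ∑ c, |Γ c - Γ' c| :=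
                    Finset.sum_le_sum fun c _ =>
                      max_le (le_abs_self _) (abs_nonneg _)
                  split
                  · exact Finset.sum_nonneg fun c _ => abs_nonneg _
                  · exact hMle
                rw [mul_comm]
                exact mul_le_mul_of_nonneg_left h1 hRz

private lemma sInf_le_sInf_add {S S' : Set ℝ} (hS : S.Nonempty)
    (hbdd : BddBelow S') (B : ℝ) (h : ∀ x ∈ S, ∃ y ∈ S', y ≤ x + B) :
    sInf S' ≤ sInf S + B := by
  rw [← sub_le_iff_le_add]
  apply le_csInf hS
  intro x hx
  obtain ⟨y, hy, hyx⟩ := h x hx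
  have := csInf_le hbdd hy
  linarith

end Aux

/-- Lipschitz continuity of the constrained cost in the assignment constraint. -/
theorem stmt_12 {ι κ : Type*} [Fintype ι] [Fintype κ] (d z : ℕ) (hz : 1 ≤ z)
    (pts : ι → EuclideanSpace ℝ (Fin d)) (ctr : κ → EuclideanSpace ℝ (Fin d))
    (R : ℝ)
    (hR : ∀ x ∈ Set.range pts ∪ Set.range ctr, ∀ y ∈ Set.range pts ∪ Set.range ctr,
      dist x y ≤ R)
    (w : ι → ℝ) (hw : ∀ p, 0 ≤ w p)
    (Γ Γ' : κ → ℝ) (hΓ : ∀ c, 0 ≤ Γ c) (hΓ' : ∀ c, 0 ≤ Γ' c)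
    (hsum : ∑ c, Γ c = ∑ p, w p) (hsum' : ∑ c, Γ' c = ∑ p, w p) :
    |assignCost z pts ctr w Γ - assignCost z pts ctr w Γ'| ≤
      R ^ z * ∑ c, |Γ c - Γ' c| := by
  cases isEmpty_or_nonempty ι with
  | inl hempty =>
    have h0 : ∑ p, w p = 0 := by simp
    have hΓ0 : ∀ c, Γ c = 0 := all_zero hΓ (hsum.trans h0)
    have hΓ'0 : ∀ c, Γ' c = 0 := all_zero hΓ' (hsum'.trans h0)
    have : Γ = Γ' := funext fun c => (hΓ0 c).trans (hΓ'0 c).symm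
    rw [this, sub_self, abs_zero]
    cases isEmpty_or_nonempty κ with
    | inl hk => simp
    | inr hk =>
      obtain ⟨c0⟩ := hk
      have hR0 : 0 ≤ R := by
        simpa using hR (ctr c0) (Or.inr ⟨c0, rfl⟩) (ctr c0) (Or.inr ⟨c0, rfl⟩)
      exact mul_nonneg (pow_nonneg hR0 z) (Finset.sum_nonneg fun c _ => abs_nonneg _)
  | inr hne =>
    obtain ⟨p0⟩ := hne
    have hR0 : 0 ≤ R := by
      have := hR (pts p0) (Or.inl ⟨p0, rfl⟩) (pts p0) (Or.inl ⟨p0, rfl⟩)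
      simpa using this
    have hdist : ∀ p c, dist (pts p) (ctr c) ≤ R := fun p c =>
      hR (pts p) (Or.inl ⟨p, rfl⟩) (ctr c) (Or.inr ⟨c, rfl⟩)
    have key : ∀ (Γ₁ Γ₂ : κ → ℝ), (∀ c, 0 ≤ Γ₁ c) → (∀ c, 0 ≤ Γ₂ c) →
        (∑ c, Γ₁ c = ∑ p, w p) → (∑ c, Γ₂ c = ∑ p, w p) →
        assignCost z pts ctr w Γ₂ ≤ assignCost z pts ctr w Γ₁
          + R ^ z * ∑ c, |Γ₁ c - Γ₂ c| := by
      intro Γ₁ Γ₂ h₁ h₂ hs₁ hs₂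
      apply sInf_le_sInf_add (feasSet_nonempty z pts ctr w hw Γ₁ h₁ hs₁)
        (feasSet_bddBelow z pts ctr w Γ₂)
      rintro x ⟨σ, hσ0, hσr, hσc, rfl⟩
      obtain ⟨σ', h0', hr', hc', hle⟩ := reroute z pts ctr hR0 hdist w Γ₁ Γ₂ h₂
        (hs₁.trans hs₂.symm) σ hσ0 hσr hσc
      exact ⟨_, ⟨σ', h0', hr', hc', rfl⟩, hle⟩
    rw [abs_sub_le_iff]
    constructor
    · have h := key Γ' Γ hΓ' hΓ hsum' hsum
      have he : ∑ c, |Γ' c - Γ c| = ∑ c, |Γ c - Γ' c| :=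
        Finset.sum_congr rfl fun c _ => abs_sub_comm _ _
      rw [he] at h
      linarith
    · have h := key Γ Γ' hΓ hΓ' hsum hsum'
      linarith
end
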